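/- For δ > 0, the function q(x) = δ x^{δ−1}(1+x)^{−1−δ} for x > 0 is a probability density (i.e., ∫_0^∞ q(x) dx = 1), and it satisfies the stationarity equation q(x) = (x^{δ−1}/B(δ+1,δ)) ∫_0^∞ (1+y)^{δ+1} (1+x+y)^{−1−2δ} q(y) dy for all x > 0. -/

import Mathlib

open MeasureTheory

/-- The Beta function `B(a, b) = Γ(a)Γ(b)/Γ(a+b)` for positive real arguments. -/
noncomputable def betaFun (a b : ℝ) : ℝ := Real.Gamma a * Real.Gamma b / Real.Gamma (a + b)

lemma betaFun_pos {a b : ℝ} (ha : 0 < a) (hb : 0 < b) : 0 < betaFun a b :=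
  div_pos (mul_pos (Real.Gamma_pos_of_pos ha) (Real.Gamma_pos_of_pos hb))
    (Real.Gamma_pos_of_pos (by linarith))

lemma betaFun_symm (a b : ℝ) : betaFun a b = betaFun b a := by
  unfold betaFun; rw [mul_comm, add_comm]

lemma beta_Ioo {a b : ℝ} (ha : 0 < a) (hb : 0 < b) :
    ∫ x in Set.Ioo (0:ℝ) 1, x ^ (a - 1) * (1 - x) ^ (b - 1) = betaFun a b := by
  have key := Complex.Gamma_mul_Gamma_eq_betaIntegral (s := (a:ℂ)) (t := (b:ℂ))
    (by simpa using ha) (by simpa using hb)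
  rw [← Complex.ofReal_add, Complex.Gamma_ofReal, Complex.Gamma_ofReal,
    Complex.Gamma_ofReal] at key
  have hne : (Real.Gamma (a + b) : ℂ) ≠ 0 := by
    exact_mod_cast (Real.Gamma_pos_of_pos (by linarith : (0:ℝ) < a + b)).ne'
  have hbeta : Complex.betaIntegral a b = ((betaFun a b : ℝ) : ℂ) := by
    rw [betaFun, Complex.ofReal_div, Complex.ofReal_mul, eq_div_iff hne]
    linear_combination -key
  have hint : Complex.betaIntegral a b
      = ((∫ x in Set.Ioo (0:ℝ) 1, x ^ (a - 1) * (1 - x) ^ (b - 1) : ℝ) : ℂ) := by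
    rw [Complex.betaIntegral, intervalIntegral.integral_of_le (by norm_num : (0:ℝ) ≤ 1),
      integral_Ioc_eq_integral_Ioo]
    have step : ∫ t in Set.Ioo (0:ℝ) 1, (t:ℂ) ^ ((a:ℂ) - 1) * (1 - (t:ℂ)) ^ ((b:ℂ) - 1)
        = ∫ t in Set.Ioo (0:ℝ) 1, ((t ^ (a - 1) * (1 - t) ^ (b - 1) : ℝ) : ℂ) := by
      refine setIntegral_congr_fun measurableSet_Ioo (fun t ht => ?_)
      have ht0 : (0:ℝ) ≤ t := ht.1.le
      have ht1 : (0:ℝ) ≤ 1 - t := by linarith [ht.2]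
      rw [Complex.ofReal_mul, Complex.ofReal_cpow ht0, Complex.ofReal_cpow ht1]
      push_cast
      ring
    rw [step]
    exact integral_ofReal
  rw [hint] at hbeta
  exact_mod_cast hbeta

lemma beta_Ioi {a b : ℝ} (ha : 0 < a) (hb : 0 < b) :
    ∫ x in Set.Ioi (0:ℝ), x ^ (a - 1) * (1 + x) ^ (-(a + b)) = betaFun a b := by
  have himg : (fun u : ℝ => u / (1 - u)) '' Set.Ioo 0 1 = Set.Ioi 0 := by
    ext y
    constructor
    · rintro ⟨u, hu, rfl⟩
      exact div_pos hu.1 (by linarith [hu.2])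
    · intro hy
      have hy' : (0:ℝ) < y := hy
      have h1y : (0:ℝ) < 1 + y := by linarith
      refine ⟨y / (1 + y), ⟨div_pos hy' h1y, ?_⟩, ?_⟩
      · rw [div_lt_one h1y]; linarith
      · show y / (1 + y) / (1 - y / (1 + y)) = y
        rw [show (1:ℝ) - y / (1 + y) = 1 / (1 + y) by field_simp; ring]
        field_simp
  have hderiv : ∀ u ∈ Set.Ioo (0:ℝ) 1,
      HasDerivWithinAt (fun u : ℝ => u / (1 - u)) (((1 - u) ^ 2)⁻¹) (Set.Ioo 0 1) u := by
    intro u hu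
    have h1 : (1:ℝ) - u ≠ 0 := by have := hu.2; intro h; linarith [h]
    have := ((hasDerivAt_id u).div ((hasDerivAt_const u 1).sub (hasDerivAt_id u)) h1)
    refine this.hasDerivWithinAt.congr_deriv ?_
    simp only [Pi.sub_apply, id]
    field_simp
    ring
  have hinj : Set.InjOn (fun u : ℝ => u / (1 - u)) (Set.Ioo 0 1) := by
    intro u hu v hv h
    have h1 : (1:ℝ) - u ≠ 0 := by have := hu.2; intro hh; linarith
    have h2 : (1:ℝ) - v ≠ 0 := by have := hv.2; intro hh; linarith
    field_simp at h
    linarith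
  have := integral_image_eq_integral_abs_deriv_smul measurableSet_Ioo hderiv hinj
    (fun x : ℝ => x ^ (a - 1) * (1 + x) ^ (-(a + b)))
  rw [himg] at this
  rw [this, ← beta_Ioo ha hb]
  refine setIntegral_congr_fun measurableSet_Ioo (fun u hu => ?_)
  have h0 : (0:ℝ) < u := hu.1
  have h1 : (0:ℝ) < 1 - u := by linarith [hu.2]
  have e1 : 1 + u / (1 - u) = (1 - u)⁻¹ := by field_simp; ring
  have hA : (u / (1 - u)) ^ (a - 1) = u ^ (a - 1) * (1 - u) ^ (-(a - 1)) := by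
    rw [Real.div_rpow h0.le h1.le, Real.rpow_neg h1.le, div_eq_mul_inv]
  have hB : ((1 - u)⁻¹) ^ (-(a + b)) = (1 - u) ^ (a + b) := by
    rw [Real.inv_rpow h1.le, ← Real.rpow_neg h1.le, neg_neg]
  have hC : (((1 - u)) ^ (2:ℕ))⁻¹ = (1 - u) ^ (-(2:ℝ)) := by
    rw [← Real.rpow_natCast (1 - u) 2, ← Real.rpow_neg h1.le]
    norm_num
  have hcomb : (1 - u) ^ (-(2:ℝ)) * ((1 - u) ^ (-(a - 1)) * (1 - u) ^ (a + b))
      = (1 - u) ^ (b - 1) := by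
    rw [← Real.rpow_add h1, ← Real.rpow_add h1]
    congr 1
    ring
  rw [smul_eq_mul, e1, abs_of_pos (by positivity), hA, hB, hC]
  calc (1 - u) ^ (-(2:ℝ)) * (u ^ (a - 1) * (1 - u) ^ (-(a - 1)) * (1 - u) ^ (a + b))
      = u ^ (a - 1) * ((1 - u) ^ (-(2:ℝ)) * ((1 - u) ^ (-(a - 1)) * (1 - u) ^ (a + b))) := by
        ring
    _ = u ^ (a - 1) * (1 - u) ^ (b - 1) := by rw [hcomb]

theorem SR_stationary_density_beta_model
    (δ : ℝ) (hδ : 0 < δ)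
    (q : ℝ → ℝ) (hq : ∀ x, q x = δ * x ^ (δ - 1) * (1 + x) ^ (-1 - δ)) :
    (∫ x in Set.Ioi (0 : ℝ), q x = 1) ∧
    ∀ x : ℝ, 0 < x →
      q x = (x ^ (δ - 1) / betaFun (δ + 1) δ)
        * ∫ y in Set.Ioi (0 : ℝ), (1 + y) ^ (δ + 1) * (1 + x + y) ^ (-1 - 2 * δ) * q y := by
  constructor
  · have h1 : ∫ x in Set.Ioi (0:ℝ), q x
        = δ * ∫ x in Set.Ioi (0:ℝ), x ^ (δ - 1) * (1 + x) ^ (-(δ + 1)) := by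
      rw [← integral_const_mul]
      refine setIntegral_congr_fun measurableSet_Ioi (fun x _ => ?_)
      rw [hq x, show (-1 - δ : ℝ) = -(δ + 1) by ring, mul_assoc]
    rw [h1, beta_Ioi hδ one_pos, betaFun, Real.Gamma_one, Real.Gamma_add_one hδ.ne']
    field_simp
  · intro x hx
    have hc : (0:ℝ) < 1 + x := by linarith
    have hIeq : ∫ y in Set.Ioi (0:ℝ), (1 + y) ^ (δ + 1) * (1 + x + y) ^ (-1 - 2 * δ) * q y
        = δ * ∫ y in Set.Ioi (0:ℝ), y ^ (δ - 1) * ((1 + x) + y) ^ (-(2 * δ + 1)) := by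
      rw [← integral_const_mul]
      refine setIntegral_congr_fun measurableSet_Ioi (fun y hy => ?_)
      have hy0 : (0:ℝ) < y := hy
      have h1y : (0:ℝ) < 1 + y := by linarith
      rw [hq y]
      have e1 : (1 + y) ^ (δ + 1) * (1 + y) ^ (-1 - δ) = 1 := by
        rw [← Real.rpow_add h1y, show δ + 1 + (-1 - δ) = (0:ℝ) by ring, Real.rpow_zero]
      have e2 : (1 + x + y : ℝ) = (1 + x) + y := by ring
      have e3 : (-1 - 2 * δ : ℝ) = -(2 * δ + 1) := by ring
      calc (1 + y) ^ (δ + 1) * (1 + x + y) ^ (-1 - 2 * δ) * (δ * y ^ (δ - 1) * (1 + y) ^ (-1 - δ))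
          = ((1 + y) ^ (δ + 1) * (1 + y) ^ (-1 - δ)) * (δ * (y ^ (δ - 1) * (1 + x + y) ^ (-1 - 2*δ))) := by ring
        _ = δ * (y ^ (δ - 1) * ((1 + x) + y) ^ (-(2 * δ + 1))) := by
            rw [e1, e2, e3, one_mul]
    -- substitution y = (1+x) t
    have hsub : ∫ t in Set.Ioi (0:ℝ),
        ((1 + x) * t) ^ (δ - 1) * ((1 + x) + (1 + x) * t) ^ (-(2 * δ + 1))
        = (1 + x)⁻¹ * ∫ y in Set.Ioi (0:ℝ), y ^ (δ - 1) * ((1 + x) + y) ^ (-(2 * δ + 1)) := by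
      have h := integral_comp_mul_left_Ioi
        (fun y : ℝ => y ^ (δ - 1) * ((1 + x) + y) ^ (-(2 * δ + 1))) 0 hc
      rw [mul_zero] at h
      simpa [smul_eq_mul] using h
    have hval : ∫ t in Set.Ioi (0:ℝ),
        ((1 + x) * t) ^ (δ - 1) * ((1 + x) + (1 + x) * t) ^ (-(2 * δ + 1))
        = ((1 + x) ^ (δ - 1) * (1 + x) ^ (-(2 * δ + 1))) * betaFun δ (δ + 1) := by
      rw [← beta_Ioi hδ (by linarith : (0:ℝ) < δ + 1), ← integral_const_mul]
      refine setIntegral_congr_fun measurableSet_Ioi (fun t ht => ?_)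
      have ht0 : (0:ℝ) < t := ht
      have e4 : (1 + x) + (1 + x) * t = (1 + x) * (1 + t) := by ring
      rw [e4, Real.mul_rpow hc.le ht0.le, Real.mul_rpow hc.le (by linarith : (0:ℝ) ≤ 1 + t)]
      rw [show -(δ + (δ + 1)) = -(2 * δ + 1) by ring]
      ring
    have hI2 : ∫ y in Set.Ioi (0:ℝ), y ^ (δ - 1) * ((1 + x) + y) ^ (-(2 * δ + 1))
        = (1 + x) ^ (-1 - δ) * betaFun δ (δ + 1) := by
      have : ∫ y in Set.Ioi (0:ℝ), y ^ (δ - 1) * ((1 + x) + y) ^ (-(2 * δ + 1))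
          = (1 + x) * (((1 + x) ^ (δ - 1) * (1 + x) ^ (-(2 * δ + 1))) * betaFun δ (δ + 1)) := by
        rw [← hval, hsub, ← mul_assoc, mul_inv_cancel₀ hc.ne', one_mul]
      rw [this, ← mul_assoc, ← Real.rpow_add hc,
        ← Real.rpow_one_add' hc.le
          (show 1 + (δ - 1 + -(2 * δ + 1)) ≠ 0 by intro h; nlinarith),
        show 1 + (δ - 1 + -(2 * δ + 1)) = -1 - δ by ring]
    rw [hIeq, hI2, hq x, betaFun_symm (δ + 1) δ]
    have hbne : betaFun δ (δ + 1) ≠ 0 := (betaFun_pos hδ (by linarith)).ne'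
    field_simp
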